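/- arXiv:1504.05100 — 2 statements merged into one kernel-verified Lean document; each statement's English description precedes it below -/
import Mathlib

section
/- (Singleton-type upper bound) If C ⊆ S_n is a code with minimum Ulam distance d (i.e., any two distinct elements of C are at Ulam distance ≥ d), where 1 ≤ d ≤ n, then |C| ≤ (n − d + 1)!. -/
/-- One-line notation of a permutation of `Fin n`. -/
def oneLine {n : ℕ} (σ : Equiv.Perm (Fin n)) : List (Fin n) := List.ofFn σ

/-- Length of a longest common subsequence of the one-line notations of `σ` and `τ`. -/
noncomputable def lcsLen {n : ℕ} (σ τ : Equiv.Perm (Fin n)) : ℕ :=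
  sSup {m | ∃ w : List (Fin n), w.length = m ∧ w.Sublist (oneLine σ) ∧ w.Sublist (oneLine τ)}

/-- The Ulam distance: `d_U(σ,τ) = n - L(σ,τ)`. -/
noncomputable def ulamDist {n : ℕ} (σ τ : Equiv.Perm (Fin n)) : ℕ :=
  n - lcsLen σ τ

/-- Mapping by a strictly monotone index function gives a sublist of `ofFn`. -/
lemma sublist_ofFn_comp {n k : ℕ} (σ : Fin n → Fin n) (q : Fin k → Fin n)
    (hq : StrictMono q) : (List.ofFn (fun i => σ (q i))).Sublist (List.ofFn σ) := by
  rw [List.sublist_iff_exists_fin_orderEmbedding_get_eq]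
  refine ⟨(Fin.castOrderIso (by simp)).toOrderEmbedding.trans
    ((OrderEmbedding.ofStrictMono q hq).trans
      (Fin.castOrderIso (by simp)).toOrderEmbedding), fun ix => ?_⟩
  simp [List.get_ofFn]
  rfl

lemma le_lcsLen {n k : ℕ} (σ τ : Equiv.Perm (Fin n)) (w : List (Fin n))
    (hw : w.length = k) (h1 : w.Sublist (oneLine σ)) (h2 : w.Sublist (oneLine τ)) :
    k ≤ lcsLen σ τ := by
  apply le_csSup
  · refine ⟨n, fun m hm => ?_⟩
    obtain ⟨v, hv, hv1, -⟩ := hm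
    have := hv1.length_le
    simpa [oneLine, hv] using this
  · exact ⟨w, hw, h1, h2⟩

/-- Singleton-type upper bound: a code in `S_n` with minimum Ulam distance `d`
(`1 ≤ d ≤ n`) has at most `(n - d + 1)!` codewords. -/
theorem singleton_bound {n d : ℕ} (hd1 : 1 ≤ d) (hdn : d ≤ n)
    (C : Finset (Equiv.Perm (Fin n)))
    (hC : ∀ σ ∈ C, ∀ τ ∈ C, σ ≠ τ → d ≤ ulamDist σ τ) :
    C.card ≤ (n - d + 1).factorial := by
  set k := n - d + 1 with hk
  have hkn : k ≤ n := by omega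
  set pos : Equiv.Perm (Fin n) → Fin k → Fin n :=
    fun σ i => σ⁻¹ (Fin.castLE hkn i) with hpos
  have hposinj : ∀ σ, Function.Injective (pos σ) := by
    intro σ a b h
    exact Fin.castLE_injective hkn (σ⁻¹.injective h)
  set Φ : Equiv.Perm (Fin n) → Equiv.Perm (Fin k) := fun σ => Tuple.sort (pos σ) with hΦ
  have key : ∀ σ τ : Equiv.Perm (Fin n), Φ σ = Φ τ → k ≤ lcsLen σ τ := by
    intro σ τ h
    set s := Tuple.sort (pos σ) with hs
    have hmσ : StrictMono (fun i => pos σ (s i)) :=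
      (Tuple.monotone_sort (pos σ)).strictMono_of_injective
        ((hposinj σ).comp (Equiv.injective s))
    have hmτ : StrictMono (fun i => pos τ (s i)) := by
      have : s = Tuple.sort (pos τ) := h
      rw [this]
      exact (Tuple.monotone_sort (pos τ)).strictMono_of_injective
        ((hposinj τ).comp (Equiv.injective _))
    have happσ : ∀ i, σ (pos σ (s i)) = Fin.castLE hkn (s i) := by
      intro i; simp [hpos]
    have happτ : ∀ i, τ (pos τ (s i)) = Fin.castLE hkn (s i) := by
      intro i; simp [hpos]
    refine le_lcsLen σ τ (List.ofFn (fun i => Fin.castLE hkn (s i))) (by simp [hk]) ?_ ?_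
    · have := sublist_ofFn_comp (n := n) σ (fun i => pos σ (s i)) hmσ
      simpa [happσ, oneLine] using this
    · have := sublist_ofFn_comp (n := n) τ (fun i => pos τ (s i)) hmτ
      simpa [happτ, oneLine] using this
  have hinj : Set.InjOn Φ C := by
    intro σ hσ τ hτ hφ
    by_contra hne
    have h1 := hC σ hσ τ hτ hne
    have h2 := key σ τ hφ
    have : ulamDist σ τ ≤ n - k := Nat.sub_le_sub_left h2 n
    omega
  calc C.card ≤ (Finset.univ : Finset (Equiv.Perm (Fin k))).card :=
        Finset.card_le_card_of_injOn Φ (fun a _ => Finset.mem_univ _) hinj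
    _ = (n - d + 1).factorial := by
        rw [Finset.card_univ, Fintype.card_perm, Fintype.card_fin]
end

section
/- The map sending a permutation σ ∈ S_n with minimum Ulam distance d code C to the subsequence of its one-line notation consisting of the symbols 1, 2, ..., n−d+1 (in the order they appear) is injective on C; consequently |C| ≤ (n−d+1)!. -/
lemma oneLine_perm_finRange {n : ℕ} (σ : Equiv.Perm (Fin n)) :
    (oneLine σ).Perm (List.finRange n) := by
  rw [oneLine, List.ofFn_eq_map]
  exact σ.map_finRange_perm

lemma range_filter_len (n k : ℕ) :
    ((List.range n).filter (fun x => decide (x < k))).length = min k n := by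
  induction n with
  | zero => simp
  | succ m ih =>
    rw [List.range_succ, List.filter_append, List.length_append, ih]
    by_cases h : m < k <;> simp [h] <;> omega

/-- The coerced filtered list equals filter-then-map form. -/
lemma coe_filter_eq {n k : ℕ} (σ : Equiv.Perm (Fin n)) :
    (List.filter (fun x => decide (x < k))
      (do let a ← oneLine σ; pure ((a : Fin n) : ℕ)) : List ℕ)
    = ((oneLine σ).filter (fun a : Fin n => decide ((a : ℕ) < k))).map Fin.val := by
  rw [show (do let a ← oneLine σ; pure ((a : Fin n) : ℕ)) = (oneLine σ).map Fin.val from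
        List.map_eq_flatMap.symm]
  rw [List.filter_map]
  rfl

lemma inner_filter_length {n k : ℕ} (hk : k ≤ n) (σ : Equiv.Perm (Fin n)) :
    ((oneLine σ).filter (fun a : Fin n => decide ((a : ℕ) < k))).length = k := by
  rw [((oneLine_perm_finRange σ).filter _).length_eq]
  have h1 : ((List.finRange n).filter (fun a : Fin n => decide ((a : ℕ) < k))).length
      = (((List.finRange n).map Fin.val).filter (fun x => decide (x < k))).length := by
    rw [List.filter_map, List.length_map]; rfl
  rw [h1, (show (List.finRange n).map Fin.val = List.range n from List.ext_getElem (by simp) (by simp)), range_filter_len]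
  omega

lemma lcsLen_bddAbove {n : ℕ} (σ τ : Equiv.Perm (Fin n)) :
    BddAbove {m | ∃ w : List (Fin n), w.length = m ∧ w.Sublist (oneLine σ) ∧ w.Sublist (oneLine τ)} := by
  refine ⟨n, fun m hm => ?_⟩
  obtain ⟨w, hw, hs, _⟩ := hm
  have := hs.length_le
  simpa [oneLine, hw] using this

/-- The map sending a codeword to the subsequence of its one-line notation formed
by the `n - d + 1` smallest symbols (in order of appearance) is injective on a
code of minimum Ulam distance `d`; consequently `|C| ≤ (n - d + 1)!`. -/
theorem small_symbols_injective {n d : ℕ} (hd1 : 1 ≤ d) (hdn : d ≤ n)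
    (C : Finset (Equiv.Perm (Fin n)))
    (hC : ∀ σ ∈ C, ∀ τ ∈ C, σ ≠ τ → d ≤ ulamDist σ τ) :
    Set.InjOn (fun σ : Equiv.Perm (Fin n) =>
        (oneLine σ).filter (fun x => decide ((x : ℕ) < n - d + 1))) (C : Set (Equiv.Perm (Fin n)))
      ∧ C.card ≤ (n - d + 1).factorial := by
  set k := n - d + 1 with hkdef
  have hk : k ≤ n := by omega
  have hinj : Set.InjOn (fun σ : Equiv.Perm (Fin n) =>
      (oneLine σ).filter (fun x => decide ((x : ℕ) < k))) (C : Set (Equiv.Perm (Fin n))) := by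
    intro σ hσ τ hτ heq
    by_contra hne
    have hd := hC σ hσ τ hτ hne
    -- common subsequence
    set w : List (Fin n) := (oneLine σ).filter (fun a : Fin n => decide ((a : ℕ) < k)) with hw
    set w' : List (Fin n) := (oneLine τ).filter (fun a : Fin n => decide ((a : ℕ) < k)) with hw'
    have hww' : w = w' := by
      have h1 := coe_filter_eq (k := k) σ
      have h2 := coe_filter_eq (k := k) τ
      simp only at heq
      rw [heq] at h1
      have : w.map Fin.val = w'.map Fin.val := by rw [← h1, h2]
      exact List.map_injective_iff.mpr Fin.val_injective this
    have hlcs : k ≤ lcsLen σ τ := by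
      apply le_csSup (lcsLen_bddAbove σ τ)
      exact ⟨w, inner_filter_length hk σ, List.filter_sublist,
        hww' ▸ List.filter_sublist⟩
    have : ulamDist σ τ ≤ d - 1 := by
      rw [ulamDist]; omega
    omega
  constructor
  · exact hinj
  · -- cardinality bound
    set L₀ : List ℕ := (List.range n).filter (fun x => decide (x < k)) with hL0
    have hL0len : L₀.length = k := by rw [hL0, range_filter_len]; omega
    have himg : ∀ σ ∈ C, ((oneLine σ).filter (fun x => decide ((x : ℕ) < k)) : List ℕ)
        ∈ L₀.permutations.toFinset := by
      intro σ _
      rw [List.mem_toFinset, List.mem_permutations]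
      rw [coe_filter_eq]
      have e1 : ((oneLine σ).filter (fun a : Fin n => decide ((a : ℕ) < k))).map Fin.val
          = ((oneLine σ).map Fin.val).filter (fun x => decide (x < k)) := by
        rw [List.filter_map]; rfl
      have e2 : (((oneLine σ).map Fin.val).filter (fun x => decide (x < k))).Perm
          (((List.finRange n).map Fin.val).filter (fun x => decide (x < k))) :=
        ((oneLine_perm_finRange σ).map Fin.val).filter _
      rw [e1]
      refine e2.trans ?_
      rw [(show (List.finRange n).map Fin.val = List.range n from List.ext_getElem (by simp) (by simp))]
    have hcard := Finset.card_le_card_of_injOn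
      (fun σ => (List.filter (fun x => decide (x < k))
        (do let a ← oneLine σ; pure ((a : Fin n) : ℕ)) : List ℕ))
      himg (fun a ha b hb h => hinj ha hb h)
    calc C.card ≤ L₀.permutations.toFinset.card := hcard
      _ ≤ L₀.permutations.length := L₀.permutations.toFinset_card_le
      _ = k.factorial := by rw [List.length_permutations, hL0len]
end
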